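/- Let p ≥ 2 and K > 0, let B be a real Banach space with modulus of uniform convexity η(ε) = K ε^p, let T be a nonexpansive linear operator on B, let x ∈ B with x ≠ 0, and let ε > 0 with ε < 2‖x‖. Set M = ⌈16‖x‖/ε⌉ and γ = (ε/8) · K · (ε/(8‖x‖))^{p−1}. Then the sequence of ergodic averages (A_n x)_{n≥1} admits at most ⌊4 (log M) ‖x‖/ε⌋ + ⌊‖x‖/γ⌋ · ⌊4 (log 2M) ‖x‖/ε⌋ + ⌊‖x‖/γ⌋ many ε-fluctuations, where log is the natural logarithm. -/

import Mathlib

open Finset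

/-- The ergodic averages `A n x = (1/n) ∑_{i<n} Tⁱ x`. -/
noncomputable def ergAvg {B : Type*} [NormedAddCommGroup B] [Module ℝ B]
    (T : B →ₗ[ℝ] B) (n : ℕ) (x : B) : B :=
  (n : ℝ)⁻¹ • ∑ i ∈ Finset.range n, (T ^ i) x

/-- The sequence `(a n)_{n ≥ 1}` admits `k` `ε`-fluctuations: there are indices
`1 ≤ i₁ ≤ j₁ ≤ i₂ ≤ j₂ ≤ … ≤ i_k ≤ j_k` with `‖a (j u) - a (i u)‖ ≥ ε` for each `u`. -/
def AdmitsFluctuations {B : Type*} [NormedAddCommGroup B] (a : ℕ → B) (ε : ℝ) (k : ℕ) : Prop :=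
  ∃ i j : ℕ → ℕ,
    (∀ u < k, 1 ≤ i u ∧ i u ≤ j u ∧ ε ≤ ‖a (j u) - a (i u)‖) ∧
    (∀ u, u + 1 < k → j u ≤ i (u + 1))

section Aux

variable {B : Type*} [NormedAddCommGroup B] [NormedSpace ℝ B] (T : B →ₗ[ℝ] B)

lemma pow_apply_norm_le (hT : ∀ y : B, ‖T y‖ ≤ ‖y‖) :
    ∀ (k : ℕ) (y : B), ‖(T ^ k) y‖ ≤ ‖y‖ := by
  intro k
  induction k with
  | zero => intro y; simp
  | succ n ih =>
    intro y
    rw [pow_succ, Module.End.mul_apply]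
    exact (ih (T y)).trans (hT y)

lemma ergAvg_norm_le (hT : ∀ y : B, ‖T y‖ ≤ ‖y‖) (n : ℕ) (y : B) :
    ‖ergAvg T n y‖ ≤ ‖y‖ := by
  rcases Nat.eq_zero_or_pos n with h | h
  · subst h; simp [ergAvg, norm_nonneg]
  have hn : (0:ℝ) < n := by exact_mod_cast h
  rw [ergAvg, norm_smul, Real.norm_eq_abs, abs_of_nonneg (by positivity)]
  have h1 : ‖∑ i ∈ range n, (T ^ i) y‖ ≤ (n:ℝ) * ‖y‖ := by
    refine (norm_sum_le _ _).trans ?_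
    calc ∑ i ∈ range n, ‖(T^i) y‖ ≤ ∑ _i ∈ range n, ‖y‖ :=
          Finset.sum_le_sum fun i _ => pow_apply_norm_le T hT i y
      _ = n * ‖y‖ := by simp [mul_comm]
  calc (n:ℝ)⁻¹ * ‖∑ i ∈ range n, (T ^ i) y‖ ≤ (n:ℝ)⁻¹ * ((n:ℝ) * ‖y‖) :=
        mul_le_mul_of_nonneg_left h1 (by positivity)
    _ = ‖y‖ := by field_simp

lemma ergAvg_add (n : ℕ) (y z : B) :
    ergAvg T n (y + z) = ergAvg T n y + ergAvg T n z := by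
  simp [ergAvg, map_add, Finset.sum_add_distrib, smul_add]

lemma ergAvg_sub (n : ℕ) (y z : B) :
    ergAvg T n (y - z) = ergAvg T n y - ergAvg T n z := by
  simp [ergAvg, map_sub, Finset.sum_sub_distrib, smul_sub]

lemma ergAvg_smul_vec (n : ℕ) (c : ℝ) (y : B) :
    ergAvg T n (c • y) = c • ergAvg T n y := by
  simp only [ergAvg, map_smul, ← Finset.smul_sum]
  rw [smul_comm]

lemma ergAvg_eq_double (n m : ℕ) (y : B) :
    ergAvg T n (ergAvg T m y)
      = ((n:ℝ)⁻¹ * (m:ℝ)⁻¹) • ∑ a ∈ range n, ∑ b ∈ range m, (T ^ (a + b)) y := by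
  simp only [ergAvg, map_smul, map_sum, ← Module.End.mul_apply, ← pow_add,
    ← Finset.smul_sum, smul_smul]

lemma ergAvg_comm (n m : ℕ) (y : B) :
    ergAvg T n (ergAvg T m y) = ergAvg T m (ergAvg T n y) := by
  rw [ergAvg_eq_double, ergAvg_eq_double, Finset.sum_comm, mul_comm]
  congr 1
  refine Finset.sum_congr rfl fun b _ => Finset.sum_congr rfl fun a _ => ?_
  rw [add_comm]

lemma iter_dist (hT : ∀ y : B, ‖T y‖ ≤ ‖y‖) :
    ∀ (k : ℕ) (y : B), ‖(T ^ k) y - y‖ ≤ (k:ℝ) * ‖T y - y‖ := by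
  intro k
  induction k with
  | zero => intro y; simp
  | succ n ih =>
    intro y
    have h1 : (T ^ (n+1)) y - y = (T ^ n) (T y - y) + ((T ^ n) y - y) := by
      rw [map_sub, pow_succ, Module.End.mul_apply]; abel
    rw [h1]
    calc ‖(T ^ n) (T y - y) + ((T ^ n) y - y)‖
        ≤ ‖(T ^ n) (T y - y)‖ + ‖(T ^ n) y - y‖ := norm_add_le _ _
      _ ≤ ‖T y - y‖ + (n:ℝ) * ‖T y - y‖ :=
          add_le_add (pow_apply_norm_le T hT n _) (ih y)
      _ = ((n+1:ℕ):ℝ) * ‖T y - y‖ := by push_cast; ring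

lemma avg_fix (hT : ∀ y : B, ‖T y‖ ≤ ‖y‖) (n : ℕ) (hn : 1 ≤ n) (y : B) :
    ‖ergAvg T n y - y‖ ≤ (n:ℝ) * ‖T y - y‖ / 2 := by
  have hn0 : (0:ℝ) < n := by exact_mod_cast hn
  have hkey : ergAvg T n y - y = (n:ℝ)⁻¹ • ∑ k ∈ range n, ((T ^ k) y - y) := by
    rw [Finset.sum_sub_distrib, smul_sub, ergAvg]
    congr 1
    rw [Finset.sum_const, Finset.card_range]
    rw [← Nat.cast_smul_eq_nsmul ℝ, smul_smul, inv_mul_cancel₀ (ne_of_gt hn0), one_smul]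
  rw [hkey, norm_smul, Real.norm_eq_abs, abs_of_nonneg (by positivity)]
  have hsum : ‖∑ k ∈ range n, ((T ^ k) y - y)‖ ≤ (∑ k ∈ range n, (k:ℝ)) * ‖T y - y‖ := by
    refine (norm_sum_le _ _).trans ?_
    rw [Finset.sum_mul]
    exact Finset.sum_le_sum fun k _ => iter_dist T hT k y
  have hgauss : (∑ k ∈ range n, (k:ℝ)) * 2 ≤ (n:ℝ) * (n:ℝ) := by
    have h := Finset.sum_range_id_mul_two n
    have h2 : ((∑ k ∈ range n, k) * 2 : ℕ) ≤ n * n := by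
      rw [h]; exact Nat.mul_le_mul_left n (Nat.sub_le n 1)
    calc (∑ k ∈ range n, (k:ℝ)) * 2 = (((∑ k ∈ range n, k) * 2 : ℕ) : ℝ) := by push_cast; ring
      _ ≤ ((n * n : ℕ) : ℝ) := by exact_mod_cast h2
      _ = (n:ℝ) * n := by push_cast; ring
  have hd : (0:ℝ) ≤ ‖T y - y‖ := norm_nonneg _
  calc (n:ℝ)⁻¹ * ‖∑ k ∈ range n, ((T ^ k) y - y)‖
      ≤ (n:ℝ)⁻¹ * ((∑ k ∈ range n, (k:ℝ)) * ‖T y - y‖) :=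
        mul_le_mul_of_nonneg_left hsum (by positivity)
    _ ≤ (n:ℝ) * ‖T y - y‖ / 2 := by
        rw [inv_mul_eq_div, div_le_div_iff₀ hn0 two_pos]
        nlinarith [Finset.sum_nonneg (fun k (_ : k ∈ range n) => Nat.cast_nonneg (α := ℝ) k)]

lemma shift_bound (hT : ∀ y : B, ‖T y‖ ≤ ‖y‖) (m : ℕ) (hm : 1 ≤ m) (y : B) :
    ‖T (ergAvg T m y) - ergAvg T m y‖ ≤ 2 * ‖y‖ / m := by
  have hm0 : (0:ℝ) < m := by exact_mod_cast hm
  have hkey : T (ergAvg T m y) - ergAvg T m y = (m:ℝ)⁻¹ • ((T ^ m) y - y) := by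
    rw [ergAvg, map_smul, ← smul_sub]
    congr 1
    rw [map_sum, ← Finset.sum_sub_distrib]
    have : ∀ k, T ((T ^ k) y) - (T ^ k) y = (T ^ (k+1)) y - (T ^ k) y := by
      intro k
      rw [← Module.End.mul_apply, ← pow_succ', pow_succ, Module.End.mul_apply]
    calc ∑ k ∈ range m, (T ((T ^ k) y) - (T ^ k) y)
        = ∑ k ∈ range m, ((T ^ (k+1)) y - (T ^ k) y) := by
          exact Finset.sum_congr rfl fun k _ => this k
      _ = (T ^ m) y - (T ^ 0) y := Finset.sum_range_sub (fun k => (T ^ k) y) m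
      _ = (T ^ m) y - y := by rw [pow_zero]; rfl
  rw [hkey, norm_smul, Real.norm_eq_abs, abs_of_nonneg (by positivity)]
  have : ‖(T ^ m) y - y‖ ≤ 2 * ‖y‖ := by
    calc ‖(T ^ m) y - y‖ ≤ ‖(T ^ m) y‖ + ‖y‖ := norm_sub_le _ _
      _ ≤ ‖y‖ + ‖y‖ := add_le_add (pow_apply_norm_le T hT m y) le_rfl
      _ = 2 * ‖y‖ := by ring
  calc (m:ℝ)⁻¹ * ‖(T ^ m) y - y‖ ≤ (m:ℝ)⁻¹ * (2 * ‖y‖) :=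
        mul_le_mul_of_nonneg_left this (by positivity)
    _ = 2 * ‖y‖ / m := by field_simp

end Aux

set_option maxHeartbeats 1600000 in
/-- With `M = ⌈16‖x‖/ε⌉` and `γ = (ε/8)·K·(ε/(8‖x‖))^{p-1}`, the sequence of ergodic averages of
a nonexpansive linear operator on a Banach space with modulus of uniform convexity
`η(ε) = K ε^p` admits at most
`⌊4 (log M) ‖x‖/ε⌋ + ⌊‖x‖/γ⌋·⌊4 (log 2M) ‖x‖/ε⌋ + ⌊‖x‖/γ⌋` many `ε`-fluctuations. -/
theorem stmt14 (p K : ℝ) (hp : 2 ≤ p) (hK : 0 < K)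
    {B : Type*} [NormedAddCommGroup B] [NormedSpace ℝ B] [CompleteSpace B]
    (huc : ∀ ε ∈ Set.Ioc (0 : ℝ) 2, ∀ x y : B, ‖x‖ ≤ 1 → ‖y‖ ≤ 1 → ε ≤ ‖x - y‖ →
      ‖(1 / 2 : ℝ) • (x + y)‖ ≤ 1 - K * ε ^ p)
    (T : B →ₗ[ℝ] B) (hT : ∀ y : B, ‖T y‖ ≤ ‖y‖)
    (x : B) (hx : x ≠ 0) (ε : ℝ) (hε : 0 < ε) (hε2 : ε < 2 * ‖x‖) :
    ∀ k : ℕ, AdmitsFluctuations (fun n => ergAvg T n x) ε k →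
      k ≤ ⌊4 * Real.log (⌈16 * ‖x‖ / ε⌉₊ : ℝ) * ‖x‖ / ε⌋₊
          + ⌊‖x‖ / (ε / 8 * (K * (ε / (8 * ‖x‖)) ^ (p - 1)))⌋₊
            * ⌊4 * Real.log (2 * (⌈16 * ‖x‖ / ε⌉₊ : ℝ)) * ‖x‖ / ε⌋₊
          + ⌊‖x‖ / (ε / 8 * (K * (ε / (8 * ‖x‖)) ^ (p - 1)))⌋₊ := by
  intro k hfl
  classical
  obtain ⟨i, j, h1, h2⟩ := hfl
  have hX : 0 < ‖x‖ := norm_pos_iff.mpr hx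
  set X := ‖x‖ with hXdef
  set q : ℝ := ε / (2 * X) with hqdef
  have hq0 : 0 < q := div_pos hε (by linarith)
  have hq1 : q < 1 := by rw [hqdef, div_lt_one (by linarith)]; exact hε2
  set M : ℕ := ⌈16 * X / ε⌉₊ with hMdef
  have hM16 : 16 * X / ε ≤ (M : ℝ) := Nat.le_ceil _
  have h16X : (8 : ℝ) < 16 * X / ε := by rw [lt_div_iff₀ hε]; nlinarith
  have hM8 : (8 : ℝ) < M := lt_of_lt_of_le h16X hM16
  set γ : ℝ := ε / 8 * (K * (ε / (8 * X)) ^ (p - 1)) with hγdef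
  have hγ0 : 0 < γ := by
    have h := Real.rpow_pos_of_pos (show (0:ℝ) < ε / (8 * X) by
      apply div_pos hε; linarith) (p - 1)
    exact mul_pos (by linarith) (mul_pos hK h)
  -- log facts
  have hexp2 : Real.exp 2 < 8 := by
    have h := Real.exp_one_lt_d9
    have h2 : Real.exp 2 = Real.exp 1 * Real.exp 1 := by
      rw [← Real.exp_add]; norm_num
    nlinarith [Real.exp_pos 1]
  have hlog8 : (2 : ℝ) ≤ Real.log 8 := by
    rw [Real.le_log_iff_exp_le (by norm_num)]; linarith
  have hlogM : (2 : ℝ) ≤ Real.log (M : ℝ) :=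
    le_trans hlog8 (Real.log_le_log (by norm_num) (by linarith))
  set N0 : ℕ := ⌊4 * Real.log (M : ℝ) * X / ε⌋₊ with hN0def
  set S : ℕ := ⌊4 * Real.log (2 * (M : ℝ)) * X / ε⌋₊ with hSdef
  set D : ℕ := ⌊X / γ⌋₊ with hDdef
  clear_value X q M γ N0 S D
  have hN0S : N0 ≤ S := by
    rw [hN0def, hSdef]
    apply Nat.floor_le_floor
    have hlog2M : Real.log (M : ℝ) ≤ Real.log (2 * (M : ℝ)) :=
      Real.log_le_log (by linarith) (by linarith)
    exact (div_le_div_iff_of_pos_right hε).mpr (by nlinarith)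
  -- growth lemma: a fluctuation forces geometric index growth
  have hgrow : ∀ i0 j0 : ℕ, 1 ≤ i0 → i0 ≤ j0 →
      ε ≤ ‖ergAvg T j0 x - ergAvg T i0 x‖ → (i0 : ℝ) ≤ (1 - q) * j0 := by
    intro i0 j0 hi1 hij hf
    have hi0 : (0:ℝ) < i0 := by exact_mod_cast hi1
    have hj1 : 1 ≤ j0 := le_trans hi1 hij
    have hj0 : (0:ℝ) < j0 := by exact_mod_cast hj1
    have hijR : (i0:ℝ) ≤ j0 := by exact_mod_cast hij
    have hdecomp : ergAvg T j0 x - ergAvg T i0 x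
        = ((j0:ℝ)⁻¹ - (i0:ℝ)⁻¹) • (∑ r ∈ range i0, (T ^ r) x)
          + (j0:ℝ)⁻¹ • (∑ r ∈ Finset.Ico i0 j0, (T ^ r) x) := by
      have hS : ∑ r ∈ Finset.Ico i0 j0, (T ^ r) x
          = ∑ r ∈ range j0, (T ^ r) x - ∑ r ∈ range i0, (T ^ r) x :=
        Finset.sum_Ico_eq_sub _ hij
      rw [ergAvg, ergAvg, hS, smul_sub, sub_smul]
      abel
    have hn1 : ‖∑ r ∈ range i0, (T ^ r) x‖ ≤ (i0:ℝ) * X := by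
      refine (norm_sum_le _ _).trans ?_
      calc ∑ r ∈ range i0, ‖(T ^ r) x‖ ≤ ∑ _r ∈ range i0, X :=
            Finset.sum_le_sum fun r _ => le_of_le_of_eq (pow_apply_norm_le T hT r x) hXdef.symm
        _ = (i0:ℝ) * X := by simp [mul_comm]
    have hn2 : ‖∑ r ∈ Finset.Ico i0 j0, (T ^ r) x‖ ≤ ((j0:ℝ) - i0) * X := by
      refine (norm_sum_le _ _).trans ?_
      calc ∑ r ∈ Finset.Ico i0 j0, ‖(T ^ r) x‖ ≤ ∑ _r ∈ Finset.Ico i0 j0, X :=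
            Finset.sum_le_sum fun r _ => le_of_le_of_eq (pow_apply_norm_le T hT r x) hXdef.symm
        _ = ((j0 - i0 : ℕ):ℝ) * X := by simp [Nat.card_Ico, mul_comm]
        _ = ((j0:ℝ) - i0) * X := by rw [Nat.cast_sub hij]
    have habs : |(j0:ℝ)⁻¹ - (i0:ℝ)⁻¹| = (i0:ℝ)⁻¹ - (j0:ℝ)⁻¹ := by
      rw [abs_sub_comm, abs_of_nonneg]
      have : (j0:ℝ)⁻¹ ≤ (i0:ℝ)⁻¹ := by
        apply inv_anti₀ hi0 hijR
      linarith
    have hb : ε ≤ ((i0:ℝ)⁻¹ - (j0:ℝ)⁻¹) * ((i0:ℝ) * X) + (j0:ℝ)⁻¹ * (((j0:ℝ) - i0) * X) := by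
      refine hf.trans ?_
      rw [hdecomp]
      refine (norm_add_le _ _).trans (add_le_add ?_ ?_)
      · rw [norm_smul, Real.norm_eq_abs, habs]
        apply mul_le_mul_of_nonneg_left hn1
        have : (j0:ℝ)⁻¹ ≤ (i0:ℝ)⁻¹ := inv_anti₀ hi0 hijR
        linarith
      · rw [norm_smul, Real.norm_eq_abs, abs_of_nonneg (by positivity)]
        exact mul_le_mul_of_nonneg_left hn2 (by positivity)
    have e1 : ((i0:ℝ)⁻¹ - (j0:ℝ)⁻¹) * ((i0:ℝ) * X) + (j0:ℝ)⁻¹ * (((j0:ℝ) - i0) * X)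
        = 2 * X * (((j0:ℝ) - i0) / j0) := by
      field_simp
      ring
    rw [e1] at hb
    have hb' : ε * j0 ≤ 2 * X * (((j0:ℝ) - i0) / j0) * j0 :=
      mul_le_mul_of_nonneg_right hb (le_of_lt hj0)
    have hb'' : 2 * X * (((j0:ℝ) - i0) / j0) * j0 = ((j0:ℝ) - i0) * (2 * X) := by
      field_simp
    have hqj : q * j0 ≤ (j0:ℝ) - i0 := by
      rw [hqdef, div_mul_eq_mul_div, div_le_iff₀ (by linarith : (0:ℝ) < 2 * X)]
      nlinarith
    have hexpand : (1 - q) * j0 = j0 - q * j0 := by ring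
    linarith
  -- ergAvg T i0 applied to a m is close to a m
  have hF : ∀ i0 m : ℕ, 1 ≤ i0 → 1 ≤ m →
      ‖ergAvg T i0 (ergAvg T m x) - ergAvg T m x‖ ≤ (i0:ℝ) * X / m := by
    intro i0 m hi1 hm1
    have hm0 : (0:ℝ) < m := by exact_mod_cast hm1
    have hi00 : (0:ℝ) ≤ i0 := Nat.cast_nonneg _
    calc ‖ergAvg T i0 (ergAvg T m x) - ergAvg T m x‖
        ≤ (i0:ℝ) * ‖T (ergAvg T m x) - ergAvg T m x‖ / 2 := avg_fix T hT i0 hi1 _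
      _ ≤ (i0:ℝ) * (2 * X / m) / 2 := by
          have := shift_bound T hT m hm1 x
          rw [← hXdef] at this
          have h2 : (i0:ℝ) * ‖T (ergAvg T m x) - ergAvg T m x‖ ≤ (i0:ℝ) * (2 * X / m) :=
            mul_le_mul_of_nonneg_left this hi00
          linarith
      _ = (i0:ℝ) * X / m := by field_simp
  -- invariant propagation
  have hprop : ∀ (w : B) (n0 i0 j0 : ℕ), 1 ≤ i0 → i0 ≤ j0 →
      (∀ m : ℕ, 1 ≤ m → ‖ergAvg T m x - ergAvg T m w‖ ≤ (n0:ℝ) * X / m) →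
      ∀ m : ℕ, 1 ≤ m →
        ‖ergAvg T m x - ergAvg T m ((1/2 : ℝ) • (ergAvg T i0 w + ergAvg T j0 w))‖
          ≤ ((n0:ℝ) + j0) * X / m := by
    intro w n0 i0 j0 hi1 hij hInv m hm
    have hm0 : (0:ℝ) < m := by exact_mod_cast hm
    have hexp : ergAvg T m ((1/2 : ℝ) • (ergAvg T i0 w + ergAvg T j0 w))
        = (1/2 : ℝ) • (ergAvg T i0 (ergAvg T m w) + ergAvg T j0 (ergAvg T m w)) := by
      rw [ergAvg_smul_vec, ergAvg_add, ergAvg_comm T m i0, ergAvg_comm T m j0]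
    have hbr : ∀ l : ℕ, 1 ≤ l → l ≤ j0 →
        ‖ergAvg T m x - ergAvg T l (ergAvg T m w)‖ ≤ ((n0:ℝ) + j0) * X / m := by
      intro l hl1 hlj
      have hlR : (l:ℝ) ≤ j0 := by exact_mod_cast hlj
      have t1 : ‖ergAvg T m x - ergAvg T l (ergAvg T m x)‖ ≤ (l:ℝ) * X / m := by
        rw [norm_sub_rev]; exact hF l m hl1 hm
      have t2 : ‖ergAvg T l (ergAvg T m x) - ergAvg T l (ergAvg T m w)‖ ≤ (n0:ℝ) * X / m := by
        rw [← ergAvg_sub]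
        exact (ergAvg_norm_le T hT l _).trans (hInv m hm)
      have t3 : ‖ergAvg T m x - ergAvg T l (ergAvg T m w)‖
          ≤ ‖ergAvg T m x - ergAvg T l (ergAvg T m x)‖
            + ‖ergAvg T l (ergAvg T m x) - ergAvg T l (ergAvg T m w)‖ :=
        norm_sub_le_norm_sub_add_norm_sub _ _ _
      have : (l:ℝ) * X / m + (n0:ℝ) * X / m ≤ ((n0:ℝ) + j0) * X / m := by
        rw [← add_div]
        gcongr
        nlinarith
      linarith
    have hcomb : ergAvg T m x - ergAvg T m ((1/2 : ℝ) • (ergAvg T i0 w + ergAvg T j0 w))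
        = (1/2 : ℝ) • ((ergAvg T m x - ergAvg T i0 (ergAvg T m w))
            + (ergAvg T m x - ergAvg T j0 (ergAvg T m w))) := by
      rw [hexp]
      module
    rw [hcomb, norm_smul, Real.norm_eq_abs]
    have h1' := hbr i0 hi1 hij
    have h2' := hbr j0 (le_trans hi1 hij) le_rfl
    have hn := norm_add_le (ergAvg T m x - ergAvg T i0 (ergAvg T m w))
      (ergAvg T m x - ergAvg T j0 (ergAvg T m w))
    rw [show |(1/2 : ℝ)| = 1/2 by norm_num]
    linarith
  -- the trigger step: uniform convexity forces a norm drop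
  have htrig : ∀ (w : B) (n0 i0 j0 : ℕ) (b : ℝ), ‖w‖ ≤ b → b ≤ X →
      (∀ m : ℕ, 1 ≤ m → ‖ergAvg T m x - ergAvg T m w‖ ≤ (n0:ℝ) * X / m) →
      1 ≤ i0 → i0 ≤ j0 → ε ≤ ‖ergAvg T j0 x - ergAvg T i0 x‖ →
      8 * X * (n0:ℝ) ≤ ε * i0 →
      ‖(1/2 : ℝ) • (ergAvg T i0 w + ergAvg T j0 w)‖ ≤ b - γ := by
    intro w n0 i0 j0 b hwb hbX hInv hi1 hij hflu htr
    have hi0 : (0:ℝ) < i0 := by exact_mod_cast hi1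
    have hj1 : 1 ≤ j0 := le_trans hi1 hij
    have hj0 : (0:ℝ) < j0 := by exact_mod_cast hj1
    have hijR : (i0:ℝ) ≤ j0 := by exact_mod_cast hij
    have hu : ‖ergAvg T i0 w‖ ≤ b := (ergAvg_norm_le T hT i0 w).trans hwb
    have hv : ‖ergAvg T j0 w‖ ≤ b := (ergAvg_norm_le T hT j0 w).trans hwb
    have hni : (n0:ℝ) * X / i0 ≤ ε / 8 := by
      rw [div_le_iff₀ hi0]
      nlinarith
    have hnj : (n0:ℝ) * X / j0 ≤ ε / 8 := by
      refine le_trans (div_le_div_of_nonneg_left ?_ hi0 hijR) hni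
      exact mul_nonneg (Nat.cast_nonneg _) (le_of_lt hX)
    have h1' : ‖ergAvg T i0 x - ergAvg T i0 w‖ ≤ ε / 8 := (hInv i0 hi1).trans hni
    have h2' : ‖ergAvg T j0 x - ergAvg T j0 w‖ ≤ ε / 8 := (hInv j0 hj1).trans hnj
    have hsep : 3 * ε / 4 ≤ ‖ergAvg T i0 w - ergAvg T j0 w‖ := by
      have hdec : ergAvg T i0 x - ergAvg T j0 x
          = (ergAvg T i0 x - ergAvg T i0 w) + (ergAvg T i0 w - ergAvg T j0 w)
            + (ergAvg T j0 w - ergAvg T j0 x) := by abel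
      have h3 := norm_add₃_le (a := ergAvg T i0 x - ergAvg T i0 w)
        (b := ergAvg T i0 w - ergAvg T j0 w) (c := ergAvg T j0 w - ergAvg T j0 x)
      rw [← hdec] at h3
      have e1 : ‖ergAvg T i0 x - ergAvg T j0 x‖ = ‖ergAvg T j0 x - ergAvg T i0 x‖ :=
        norm_sub_rev _ _
      have e2 : ‖ergAvg T j0 w - ergAvg T j0 x‖ = ‖ergAvg T j0 x - ergAvg T j0 w‖ :=
        norm_sub_rev _ _
      rw [e1, e2] at h3
      linarith
    have hb38 : 3 * ε / 8 ≤ b := by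
      have := norm_sub_le (ergAvg T i0 w) (ergAvg T j0 w)
      linarith
    have hb0 : 0 < b := by linarith
    set ε0 : ℝ := 3 * ε / 4 / b with hε0def
    have hε0pos : 0 < ε0 := div_pos (by linarith) hb0
    have hε0le : ε0 ≤ 2 := by rw [hε0def, div_le_iff₀ hb0]; linarith
    have hnu : ‖b⁻¹ • ergAvg T i0 w‖ ≤ 1 := by
      rw [norm_smul, Real.norm_eq_abs, abs_of_nonneg (by positivity)]
      calc b⁻¹ * ‖ergAvg T i0 w‖ ≤ b⁻¹ * b :=
            mul_le_mul_of_nonneg_left hu (by positivity)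
        _ = 1 := inv_mul_cancel₀ (ne_of_gt hb0)
    have hnv : ‖b⁻¹ • ergAvg T j0 w‖ ≤ 1 := by
      rw [norm_smul, Real.norm_eq_abs, abs_of_nonneg (by positivity)]
      calc b⁻¹ * ‖ergAvg T j0 w‖ ≤ b⁻¹ * b :=
            mul_le_mul_of_nonneg_left hv (by positivity)
        _ = 1 := inv_mul_cancel₀ (ne_of_gt hb0)
    have hnsep : ε0 ≤ ‖b⁻¹ • ergAvg T i0 w - b⁻¹ • ergAvg T j0 w‖ := by
      rw [← smul_sub, norm_smul, Real.norm_eq_abs, abs_of_nonneg (by positivity)]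
      rw [hε0def, div_eq_inv_mul]
      exact mul_le_mul_of_nonneg_left hsep (by positivity)
    have hucres := huc ε0 ⟨hε0pos, hε0le⟩ (b⁻¹ • ergAvg T i0 w) (b⁻¹ • ergAvg T j0 w)
      hnu hnv hnsep
    have hre : (1/2 : ℝ) • (b⁻¹ • ergAvg T i0 w + b⁻¹ • ergAvg T j0 w)
        = b⁻¹ • ((1/2 : ℝ) • (ergAvg T i0 w + ergAvg T j0 w)) := by
      module
    rw [hre, norm_smul, Real.norm_eq_abs, abs_of_nonneg (by positivity)] at hucres
    have hkey : ‖(1/2 : ℝ) • (ergAvg T i0 w + ergAvg T j0 w)‖ ≤ b - b * (K * ε0 ^ p) := by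
      have := mul_le_mul_of_nonneg_left hucres (le_of_lt hb0)
      rw [← mul_assoc, mul_inv_cancel₀ (ne_of_gt hb0), one_mul] at this
      calc ‖(1/2 : ℝ) • (ergAvg T i0 w + ergAvg T j0 w)‖ ≤ b * (1 - K * ε0 ^ p) := this
        _ = b - b * (K * ε0 ^ p) := by ring
    -- now show γ ≤ b * (K * ε0 ^ p)
    have hγle : γ ≤ b * (K * ε0 ^ p) := by
      have hp0 : (0:ℝ) ≤ p := by linarith
      have hp1 : (0:ℝ) ≤ p - 1 := by linarith
      have hpow : ε0 ^ p = (3 * ε / 4) ^ p / b ^ p :=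
        Real.div_rpow (by linarith) (le_of_lt hb0) p
      have hbp : b ^ p = b ^ (p - 1) * b := by
        have e : p - 1 + 1 = p := by ring
        calc b ^ p = b ^ (p - 1 + 1) := by rw [e]
          _ = b ^ (p - 1) * b ^ (1:ℝ) := Real.rpow_add hb0 _ _
          _ = b ^ (p - 1) * b := by rw [Real.rpow_one]
      have hform : b * (K * ε0 ^ p) = K * (3 * ε / 4) ^ p / b ^ (p - 1) := by
        rw [hpow, hbp]
        field_simp
      have hγform : γ = K * (ε / 8) ^ p / X ^ (p - 1) := by
        rw [hγdef]
        have h8X : ε / (8 * X) = (ε / 8) / X := by ring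
        rw [h8X, Real.div_rpow (by linarith) (le_of_lt hX)]
        have hmul : (ε / 8) * (ε / 8) ^ (p - 1) = (ε / 8) ^ p := by
          have e : 1 + (p - 1) = p := by ring
          calc (ε / 8) * (ε / 8) ^ (p - 1) = (ε / 8) ^ (1:ℝ) * (ε / 8) ^ (p - 1) := by
                rw [Real.rpow_one]
            _ = (ε / 8) ^ (1 + (p - 1)) := (Real.rpow_add (by linarith) _ _).symm
            _ = (ε / 8) ^ p := by rw [e]
        field_simp
        rw [← hmul]
        ring
      rw [hform, hγform]
      have hnum : K * (ε / 8) ^ p ≤ K * (3 * ε / 4) ^ p :=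
        mul_le_mul_of_nonneg_left
          (Real.rpow_le_rpow (by linarith) (by linarith) hp0) (le_of_lt hK)
      have hden : b ^ (p - 1) ≤ X ^ (p - 1) :=
        Real.rpow_le_rpow (le_of_lt hb0) hbX hp1
      have hdenpos : 0 < b ^ (p - 1) := Real.rpow_pos_of_pos hb0 _
      have hnumpos : (0:ℝ) ≤ K * (3 * ε / 4) ^ p :=
        mul_nonneg (le_of_lt hK) (Real.rpow_nonneg (by linarith) p)
      exact div_le_div₀ hnumpos hnum hdenpos hden
    linarith
  -- the state machine: (current witness vector, checkpoint, #triggers, #window count)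
  let st : ℕ → B × ℕ × ℕ × ℕ := fun u => Nat.rec (x, 1, 0, 0)
    (fun u' s =>
      if 8 * X * (s.2.1 : ℝ) ≤ ε * (i u' : ℝ) then
        ((1/2 : ℝ) • (ergAvg T (i u') s.1 + ergAvg T (j u') s.1), s.2.1 + j u', s.2.2.1 + 1, 0)
      else (s.1, s.2.1, s.2.2.1, s.2.2.2 + 1)) u
  have hstep : ∀ u, st (u+1) =
      if 8 * X * ((st u).2.1 : ℝ) ≤ ε * (i u : ℝ) then
        ((1/2 : ℝ) • (ergAvg T (i u) (st u).1 + ergAvg T (j u) (st u).1),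
          (st u).2.1 + j u, (st u).2.2.1 + 1, 0)
      else ((st u).1, (st u).2.1, (st u).2.2.1, (st u).2.2.2 + 1) := fun _ => rfl
  have key : ∀ u, u ≤ k →
      1 ≤ (st u).2.1 ∧
      ‖(st u).1‖ ≤ X - ((st u).2.2.1 : ℝ) * γ ∧
      (∀ m : ℕ, 1 ≤ m → ‖ergAvg T m x - ergAvg T m (st u).1‖ ≤ ((st u).2.1 : ℝ) * X / m) ∧
      (st u).2.2.2 ≤ N0 ∧
      u ≤ (st u).2.2.1 * (1 + S) + (st u).2.2.2 ∧
      (u < k → ((st u).2.1 : ℝ) ≤ 2 * (i u : ℝ) * (1 - q) ^ (st u).2.2.2) := by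
    intro u
    induction u with
    | zero =>
      intro _
      refine ⟨le_rfl, ?_, ?_, Nat.zero_le _, Nat.zero_le _, ?_⟩
      · show ‖x‖ ≤ X - ((0:ℕ) : ℝ) * γ
        rw [← hXdef]
        simp
      · intro m hm
        have hm0 : (0:ℝ) < m := by exact_mod_cast hm
        show ‖ergAvg T m x - ergAvg T m x‖ ≤ ((1:ℕ) : ℝ) * X / m
        rw [sub_self, norm_zero]
        positivity
      · intro h0k
        have hi01 : 1 ≤ i 0 := (h1 0 h0k).1
        have : (1:ℝ) ≤ (i 0 : ℝ) := by exact_mod_cast hi01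
        show ((1:ℕ) : ℝ) ≤ 2 * (i 0 : ℝ) * (1 - q) ^ (0:ℕ)
        rw [pow_zero, mul_one]
        push_cast
        linarith
    | succ u ih =>
      intro hu1
      have huk : u < k := hu1
      obtain ⟨hn1, hwb, hinv, hrN, hcnt, hwin⟩ := ih (Nat.le_of_succ_le hu1)
      obtain ⟨hiu1, hiju, hflu⟩ := h1 u huk
      have hflu' : ε ≤ ‖ergAvg T (j u) x - ergAvg T (i u) x‖ := hflu
      have hiu0 : (0:ℝ) < (i u : ℝ) := by exact_mod_cast hiu1
      have hju1 : 1 ≤ j u := le_trans hiu1 hiju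
      have hijR : ((i u : ℕ):ℝ) ≤ (j u : ℝ) := by exact_mod_cast hiju
      have hgrj : ((i u : ℕ):ℝ) ≤ (1 - q) * (j u : ℝ) := hgrow (i u) (j u) hiu1 hiju hflu'
      by_cases htr : 8 * X * (((st u).2.1 : ℕ) : ℝ) ≤ ε * (i u : ℝ)
      · -- trigger step
        have hnR : ((st u).2.1 : ℝ) ≤ (i u : ℝ) := by
          have h2X : ε * (i u : ℝ) ≤ 2 * X * (i u : ℝ) :=
            mul_le_mul_of_nonneg_right (le_of_lt hε2) (le_of_lt hiu0)
          nlinarith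
        rw [hstep u, if_pos htr]
        refine ⟨?_, ?_, ?_, Nat.zero_le _, ?_, ?_⟩
        · show 1 ≤ (st u).2.1 + j u
          omega
        · show ‖(1/2 : ℝ) • (ergAvg T (i u) (st u).1 + ergAvg T (j u) (st u).1)‖
            ≤ X - (((st u).2.2.1 + 1 : ℕ) : ℝ) * γ
          have hb := htrig (st u).1 (st u).2.1 (i u) (j u) (X - ((st u).2.2.1 : ℝ) * γ)
            hwb (by
              have : (0:ℝ) ≤ ((st u).2.2.1 : ℝ) * γ :=
                mul_nonneg (Nat.cast_nonneg _) (le_of_lt hγ0)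
              linarith)
            hinv hiu1 hiju hflu' htr
          push_cast
          linarith
        · show ∀ m : ℕ, 1 ≤ m →
            ‖ergAvg T m x - ergAvg T m ((1/2 : ℝ) • (ergAvg T (i u) (st u).1
              + ergAvg T (j u) (st u).1))‖ ≤ (((st u).2.1 + j u : ℕ) : ℝ) * X / m
          intro m hm
          have := hprop (st u).1 (st u).2.1 (i u) (j u) hiu1 hiju hinv m hm
          push_cast
          exact this
        · show u + 1 ≤ ((st u).2.2.1 + 1) * (1 + S) + 0
          have hrS : (st u).2.2.2 ≤ S := le_trans hrN hN0S
          calc u + 1 ≤ (st u).2.2.1 * (1 + S) + (st u).2.2.2 + 1 := Nat.succ_le_succ hcnt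
            _ ≤ (st u).2.2.1 * (1 + S) + S + 1 := by
                exact Nat.add_le_add_right (Nat.add_le_add_left hrS _) 1
            _ = ((st u).2.2.1 + 1) * (1 + S) + 0 := by ring
        · intro hk2
          have hji := h2 u hk2
          have hjiR : ((j u : ℕ):ℝ) ≤ (i (u+1) : ℝ) := by exact_mod_cast hji
          show (((st u).2.1 + j u : ℕ) : ℝ) ≤ 2 * (i (u+1) : ℝ) * (1 - q) ^ (0:ℕ)
          rw [pow_zero, mul_one]
          push_cast
          linarith
      · -- non-trigger step
        have hlt : ε * (i u : ℝ) < 8 * X * (((st u).2.1 : ℕ) : ℝ) := not_le.mp htr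
        rw [hstep u, if_neg htr]
        have hwinu := hwin huk
        have hpow0 : (0:ℝ) < (1 - q) ^ (st u).2.2.2 := pow_pos (by linarith) _
        refine ⟨hn1, hwb, hinv, ?_, ?_, ?_⟩
        · show (st u).2.2.2 + 1 ≤ N0
          -- from non-trigger: ε < 16 X (1-q)^r
          have h16 : ε < 16 * X * (1 - q) ^ (st u).2.2.2 := by
            have ha : ε * (i u : ℝ) < 8 * X * (2 * (i u : ℝ) * (1 - q) ^ (st u).2.2.2) := by
              have h8X : (0:ℝ) ≤ 8 * X := by linarith
              calc ε * (i u : ℝ) < 8 * X * (((st u).2.1 : ℕ) : ℝ) := hlt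
                _ ≤ 8 * X * (2 * (i u : ℝ) * (1 - q) ^ (st u).2.2.2) :=
                    mul_le_mul_of_nonneg_left hwinu h8X
            have hb2 : ε * (i u : ℝ) < (16 * X * (1 - q) ^ (st u).2.2.2) * (i u : ℝ) := by
              nlinarith
            exact (mul_lt_mul_iff_left₀ hiu0).mp hb2
          have hdivlt : ε / (16 * X) < (1 - q) ^ (st u).2.2.2 := by
            rw [div_lt_iff₀ (by linarith : (0:ℝ) < 16 * X)]
            nlinarith
          have hlog1 : Real.log (ε / (16 * X)) < Real.log ((1 - q) ^ (st u).2.2.2) :=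
            Real.log_lt_log (div_pos hε (by linarith)) hdivlt
          rw [Real.log_pow] at hlog1
          have hlogdiv : Real.log (ε / (16 * X)) = - Real.log (16 * X / ε) := by
            rw [← Real.log_inv]
            congr 1
            rw [inv_div]
          have hlogq : Real.log (1 - q) ≤ -q := by
            have := Real.log_le_sub_one_of_pos (show (0:ℝ) < 1 - q by linarith)
            linarith
          have hrq : ((st u).2.2.2 : ℝ) * q < Real.log (16 * X / ε) := by
            have h5 : - Real.log (16 * X / ε) < ((st u).2.2.2 : ℝ) * Real.log (1 - q) := by
              rw [← hlogdiv]; exact hlog1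
            have h6 : ((st u).2.2.2 : ℝ) * Real.log (1 - q) ≤ ((st u).2.2.2 : ℝ) * (-q) :=
              mul_le_mul_of_nonneg_left hlogq (Nat.cast_nonneg _)
            nlinarith
          have hlogle : Real.log (16 * X / ε) ≤ Real.log (M : ℝ) :=
            Real.log_le_log (div_pos (by linarith) hε) hM16
          have hrq2 : ((st u).2.2.2 : ℝ) * q < Real.log (M : ℝ) := lt_of_lt_of_le hrq hlogle
          -- convert to the floor bound
          have hre : ((st u).2.2.2 : ℝ) * ε < 2 * X * Real.log (M : ℝ) := by
            have h7 : ((st u).2.2.2 : ℝ) * (ε / (2 * X)) < Real.log (M : ℝ) := by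
              rw [← hqdef]; exact hrq2
            have h8 : ((st u).2.2.2 : ℝ) * ε / (2 * X) < Real.log (M : ℝ) := by
              rw [mul_div_assoc]; exact h7
            rw [div_lt_iff₀ (by linarith : (0:ℝ) < 2 * X)] at h8
            linarith
          have hεlog : ε ≤ 2 * X * Real.log (M : ℝ) := by nlinarith
          have hfin : (((st u).2.2.2 + 1 : ℕ) : ℝ) ≤ 4 * Real.log (M : ℝ) * X / ε := by
            rw [le_div_iff₀ hε]
            push_cast
            nlinarith
          rw [hN0def]
          exact Nat.le_floor hfin
        · show u + 1 ≤ (st u).2.2.1 * (1 + S) + ((st u).2.2.2 + 1)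
          have : (st u).2.2.1 * (1 + S) + ((st u).2.2.2 + 1)
              = ((st u).2.2.1 * (1 + S) + (st u).2.2.2) + 1 := by ring
          rw [this]
          exact Nat.succ_le_succ hcnt
        · intro hk2
          have hji := h2 u hk2
          have hjiR : ((j u : ℕ):ℝ) ≤ (i (u+1) : ℝ) := by exact_mod_cast hji
          show ((st u).2.1 : ℝ) ≤ 2 * (i (u+1) : ℝ) * (1 - q) ^ ((st u).2.2.2 + 1)
          have hq1' : (0:ℝ) ≤ 1 - q := by linarith
          calc ((st u).2.1 : ℝ) ≤ 2 * (i u : ℝ) * (1 - q) ^ (st u).2.2.2 := hwinu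
            _ ≤ 2 * ((1 - q) * (j u : ℝ)) * (1 - q) ^ (st u).2.2.2 := by nlinarith
            _ = 2 * (j u : ℝ) * (1 - q) ^ ((st u).2.2.2 + 1) := by ring
            _ ≤ 2 * (i (u+1) : ℝ) * (1 - q) ^ ((st u).2.2.2 + 1) := by
                have hpp : (0:ℝ) ≤ (1 - q) ^ ((st u).2.2.2 + 1) := pow_nonneg hq1' _
                nlinarith
  -- final tally
  obtain ⟨hkn1, hkwb, _, hkrN, hkcnt, _⟩ := key k le_rfl
  have htD : (st k).2.2.1 ≤ D := by
    have h0 : (0:ℝ) ≤ ‖(st k).1‖ := norm_nonneg _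
    have ha : ((st k).2.2.1 : ℝ) * γ ≤ X := by linarith
    have hb : ((st k).2.2.1 : ℝ) ≤ X / γ := by
      rw [le_div_iff₀ hγ0]
      linarith
    rw [hDdef]
    exact Nat.le_floor hb
  calc k ≤ (st k).2.2.1 * (1 + S) + (st k).2.2.2 := hkcnt
    _ ≤ D * (1 + S) + N0 := Nat.add_le_add (Nat.mul_le_mul_right _ htD) hkrN
    _ = N0 + D * S + D := by ring
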